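/- Let 𝓕 be a self-dual complex antisymmetric 4×4 matrix and ξ ∈ ℝ⁴. Define σ_β := 2 ξ^α 𝓕_{αβ} (with ξ^α the components of ξ and sum over α), λ := −ξ^α η_{αβ} ξ^β, and 𝓕² := 𝓕_{αβ} η^{αγ} η^{βδ} 𝓕_{γδ}. Then σ_α η^{αβ} σ_β = −λ · 𝓕². -/

import Mathlib

open Matrix Complex Finset

/-- The Minkowski metric `η = diag(−1,1,1,1)` (equal to its own inverse),
with entries regarded as complex numbers. -/
def eta : Fin 4 → Fin 4 → ℂ := fun i j => if i = j then (if i = 0 then -1 else 1) else 0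

/-- The Levi-Civita symbol `ε_{abcd}` on `{0,1,2,3}`: the sign of the permutation
`(a,b,c,d)` of `(0,1,2,3)`, and `0` if any index repeats. -/
def eps (a b c d : Fin 4) : ℂ :=
  Matrix.det (Matrix.of fun i j => if ![a, b, c, d] i = j then (1 : ℂ) else 0)

/-- A complex antisymmetric `4 × 4` matrix `X` is self-dual if its Hodge dual
`X*_{ab} = ½ ε_{abcd} η^{cm} η^{dn} X_{mn}` satisfies `X* = −iX`. -/
def SelfDual (X : Matrix (Fin 4) (Fin 4) ℂ) : Prop :=
  ∀ a b, (1 / 2 : ℂ) * ∑ c, ∑ d, ∑ m, ∑ n, eps a b c d * eta c m * eta d n * X m n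
    = -Complex.I * X a b

set_option maxHeartbeats 4000000 in
/-- **Norm of the Ernst one-form:** for a self-dual `𝓕` and `ξ ∈ ℝ⁴`, with
`σ_β = 2 ξ^α 𝓕_{αβ}`, `λ = −ξ^α η_{αβ} ξ^β` and `𝓕² = 𝓕_{αβ} η^{αγ} η^{βδ} 𝓕_{γδ}`,
one has `σ_α η^{αβ} σ_β = −λ 𝓕²`. -/
theorem ernst_norm_identity (F : Matrix (Fin 4) (Fin 4) ℂ)
    (hFa : Fᵀ = -F) (hF : SelfDual F) (ξ : Fin 4 → ℝ) :
    (∑ a, ∑ b, (2 * ∑ m, (ξ m : ℂ) * F m a) * eta a b * (2 * ∑ m, (ξ m : ℂ) * F m b))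
      = -(-∑ a, ∑ b, (ξ a : ℂ) * eta a b * (ξ b : ℂ))
          * (∑ a, ∑ b, ∑ c, ∑ d, F a b * eta a c * eta b d * F c d) := by
  have hA : ∀ i j, F j i = -F i j := fun i j => by
    have h := congrFun (congrFun hFa i) j
    simpa [Matrix.transpose_apply, Matrix.neg_apply] using h
  have hd : ∀ i, F i i = 0 := fun i => by linear_combination (hA i i) / 2
  have hv : ((3 : Fin 4) : ℕ) = 3 := rfl
  have hv2 : ((2 : Fin 4) : ℕ) = 2 := rfl
  have h01 := hF 0 1
  have h02 := hF 0 2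
  have h03 := hF 0 3
  simp only [Fin.sum_univ_four] at h01 h02 h03
  simp only [_root_.eta, reduceIte, Fin.reduceEq] at h01 h02 h03
  simp only [eps, Matrix.det_succ_row_zero, Fin.sum_univ_succ, Fin.sum_univ_zero] at h01 h02 h03
  simp (config := {decide := true}) [Fin.succAbove, Matrix.submatrix, Fin.succ, Fin.castSucc] at h01 h02 h03
  have h23 : F 2 3 = -Complex.I * F 0 1 := by linear_combination h01 + (hA 2 3) / 2
  have h13 : F 1 3 = Complex.I * F 0 2 := by linear_combination (-1 : ℂ) * h02 + (hA 1 3) / 2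
  have h12 : F 1 2 = -Complex.I * F 0 3 := by linear_combination h03 + (hA 1 2) / 2
  simp only [Fin.sum_univ_four]
  simp only [_root_.eta, reduceIte, Fin.reduceEq]
  simp only [hd, hA 0 1, hA 0 2, hA 0 3, hA 1 2, hA 1 3, hA 2 3, h23, h13, h12]
  ring_nf
  simp only [Complex.I_sq]
  ring
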